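/- Let S = ℝ² and T = ℝ² \ (((-∞,-1] ∪ [1,+∞)) × {2n : n ∈ ℤ}), i.e. the plane with the pair of horizontal rays {(x,2n) : x ≤ -1} and {(x,2n) : x ≥ 1} removed for every integer n. Then there exists a homeomorphism h : S → T which preserves horizontal lines, i.e. h(x,y) = (α(x,y), y) for some continuous function α : ℝ² → ℝ, and which equals the identity outside ℝ × ⋃_{n∈ℤ} (2n − 1/2, 2n + 1/2). -/

import Mathlib

open Real Set


noncomputable def tpar (y : ℝ) : ℝ := max 0 (Real.cos (Real.pi * y))

lemma tpar_nonneg (y : ℝ) : 0 ≤ tpar y := le_max_left _ _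
lemma tpar_le_one (y : ℝ) : tpar y ≤ 1 := max_le zero_le_one (Real.cos_le_one _)
lemma tpar_continuous : Continuous tpar :=
  continuous_const.max (Real.continuous_cos.comp (continuous_const.mul continuous_id))

lemma tpar_even (n : ℤ) : tpar (2*(n:ℝ)) = 1 := by
  have h : Real.cos (Real.pi * (2*(n:ℝ))) = 1 := by
    rw [show Real.pi * (2*(n:ℝ)) = (n:ℝ) * (2*Real.pi) by ring]
    exact Real.cos_int_mul_two_pi n
  simp [tpar, h]

lemma tpar_eq_one {y : ℝ} (h : tpar y = 1) : ∃ n : ℤ, y = 2*(n:ℝ) := by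
  have hc : Real.cos (Real.pi*y) = 1 := by
    rcases max_cases 0 (Real.cos (Real.pi*y)) with ⟨h1, h2⟩ | ⟨h1, h2⟩ <;>
      rw [tpar] at h <;> linarith [h1 ▸ h]
  rcases (Real.cos_eq_one_iff _).1 hc with ⟨n, hn⟩
  refine ⟨n, ?_⟩
  have hpi := Real.pi_pos
  have : Real.pi * (2*(n:ℝ)) = Real.pi * y := by linarith [hn]
  have := mul_left_cancel₀ (ne_of_gt hpi) this
  linarith

lemma tpar_eq_zero {y : ℝ} (h : ∀ n : ℤ, y ∉ Set.Ioo (2*(n:ℝ)-1/2) (2*(n:ℝ)+1/2)) :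
    tpar y = 0 := by
  have hpi := Real.pi_pos
  have hc : Real.cos (Real.pi * y) ≤ 0 := by
    by_contra hpos
    push_neg at hpos
    set n := round (y/2) with hn
    have hzr : |y/2 - n| ≤ 1/2 := abs_sub_round (y/2)
    set z := y - 2*(n:ℝ) with hz
    have hz1 : |z| ≤ 1 := by rw [abs_le] at hzr ⊢; constructor <;> linarith [hzr.1, hzr.2]
    have hcz : Real.cos (Real.pi * z) = Real.cos (Real.pi * y) := by
      rw [show Real.pi * y = Real.pi * z + (n:ℝ) * (2*Real.pi) by rw [hz]; ring]
      exact (Real.cos_add_int_mul_two_pi _ n).symm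
    have hlt : |z| < 1/2 := by
      by_contra hge
      push_neg at hge
      have : Real.cos (Real.pi * |z|) ≤ 0 := by
        apply Real.cos_nonpos_of_pi_div_two_le_of_le
        · nlinarith
        · nlinarith [abs_nonneg z]
      rw [show Real.pi * |z| = |Real.pi * z| by rw [abs_mul, abs_of_pos hpi],
        Real.cos_abs, hcz] at this
      linarith
    exact h n (by rw [Set.mem_Ioo]; rw [abs_lt] at hlt; constructor <;> [linarith [hlt.1]; linarith [hlt.2]])
  simp [tpar, hc]


noncomputable def Af (s x : ℝ) : ℝ := (1 - s) * x + s * (x / (1 + |x|))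
noncomputable def Bf (s a : ℝ) : ℝ :=
  2 * a / (Real.sqrt ((1 - |a|)^2 + 4*(1-s)*|a|) + 1 - |a|)

lemma Af_odd (s x : ℝ) : Af s (-x) = -(Af s x) := by
  simp only [Af, abs_neg]; ring

lemma Bf_odd (s a : ℝ) : Bf s (-a) = -(Bf s a) := by
  simp only [Bf, abs_neg]; ring

lemma Af_nonneg {s x : ℝ} (hs0 : 0 ≤ s) (hs1 : s ≤ 1) (hx : 0 ≤ x) : 0 ≤ Af s x := by
  have h1 : (0:ℝ) < 1 + |x| := by positivity
  have : 0 ≤ x / (1 + |x|) := div_nonneg hx h1.le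
  have : 0 ≤ s * (x / (1 + |x|)) := mul_nonneg hs0 this
  rw [Af]; nlinarith

lemma Af_lt_one (x : ℝ) : |Af 1 x| < 1 := by
  have h1 : (0:ℝ) < 1 + |x| := by positivity
  rw [Af]
  rw [show (1-(1:ℝ)) * x + 1 * (x / (1 + |x|)) = x / (1 + |x|) by ring]
  rw [abs_div, abs_of_pos h1, div_lt_one h1]
  linarith [abs_nonneg x]

-- left inverse, nonnegative case
lemma Bf_Af_nonneg {s x : ℝ} (hs0 : 0 ≤ s) (hs1 : s ≤ 1) (hx : 0 ≤ x) :
    Bf s (Af s x) = x := by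
  have h1 : (0:ℝ) < 1 + x := by linarith
  have hax : |x| = x := abs_of_nonneg hx
  set a := Af s x with ha
  have haval : a = (1 - s) * x + s * (x / (1 + x)) := by rw [ha, Af, hax]
  have hu : x / (1 + x) * (1 + x) = x := div_mul_cancel₀ _ h1.ne'
  have huler : x / (1 + x) < 1 := by rw [div_lt_one h1]; linarith
  have hunn : 0 ≤ x / (1 + x) := div_nonneg hx h1.le
  have hanonneg : 0 ≤ a := Af_nonneg hs0 hs1 hx
  have haa : |a| = a := abs_of_nonneg hanonneg
  -- the discriminant is a perfect square
  have hQnn : 0 ≤ 1 - a + 2*(1-s)*x := by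
    have : s * (x / (1+x)) ≤ x/(1+x) := by nlinarith
    nlinarith
  have hkey : (1 - a)^2 + 4*(1-s)*a = (1 - a + 2*(1-s)*x)^2 := by
    have hq : (1-s)*x^2 + (1-a)*x - a = 0 := by
      rw [haval]; field_simp; ring
    nlinarith [hq]
  have hsq : Real.sqrt ((1 - a)^2 + 4*(1-s)*a) = 1 - a + 2*(1-s)*x := by
    rw [hkey, Real.sqrt_sq hQnn]
  have hdpos : 0 < 1 - a + (1-s)*x := by
    have : s * (x / (1+x)) < 1 := by nlinarith
    nlinarith
  rw [Bf, haa, hsq]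
  rw [show 1 - a + 2*(1-s)*x + 1 - a = 2 * (1 - a + (1-s)*x) by ring]
  rw [div_eq_iff (by positivity)]
  have hq : (1-s)*x^2 + (1-a)*x - a = 0 := by
    rw [haval]; field_simp; ring
  nlinarith [hq]

lemma Bf_Af {s x : ℝ} (hs0 : 0 ≤ s) (hs1 : s ≤ 1) : Bf s (Af s x) = x := by
  rcases le_or_gt 0 x with hx | hx
  · exact Bf_Af_nonneg hs0 hs1 hx
  · have := Bf_Af_nonneg hs0 hs1 (neg_nonneg.2 hx.le) (s := s)
    rw [Af_odd, Bf_odd] at this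
    linarith [this]

lemma D_pos {s a : ℝ} (hs1 : s ≤ 1) (h : s < 1 ∨ |a| < 1) :
    0 < Real.sqrt ((1 - |a|)^2 + 4*(1-s)*|a|) + 1 - |a| := by
  rcases lt_or_ge (|a|) 1 with hlt | hge
  · have : 0 ≤ Real.sqrt ((1 - |a|)^2 + 4*(1-s)*|a|) := Real.sqrt_nonneg _
    linarith
  · have hs : s < 1 := by rcases h with h | h; exact h; linarith
    have h1 : (|a| - 1)^2 < (1 - |a|)^2 + 4*(1-s)*|a| := by nlinarith
    have h2 : |a| - 1 < Real.sqrt ((1 - |a|)^2 + 4*(1-s)*|a|) := by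
      have := Real.sqrt_lt_sqrt (by positivity) h1
      rwa [Real.sqrt_sq (by linarith)] at this
    linarith

-- right inverse, nonnegative case
lemma Af_Bf_nonneg {s a : ℝ} (hs1 : s ≤ 1) (ha : 0 ≤ a) (h : s < 1 ∨ |a| < 1) :
    Af s (Bf s a) = a := by
  have haa : |a| = a := abs_of_nonneg ha
  set r := Real.sqrt ((1 - a)^2 + 4*(1-s)*a) with hr
  have hrnn : 0 ≤ r := Real.sqrt_nonneg _
  have hrsq : r^2 = (1 - a)^2 + 4*(1-s)*a := by
    rw [hr, Real.sq_sqrt (by nlinarith)]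
  have hD : 0 < r + 1 - a := by have := D_pos hs1 h; rwa [haa, ← hr] at this
  set x := Bf s a with hx
  have hxval : x = 2*a / (r + 1 - a) := by rw [hx, Bf, haa, hr]
  have hxnn : 0 ≤ x := by rw [hxval]; positivity
  have hxa : |x| = x := abs_of_nonneg hxnn
  have h1x : (0:ℝ) < 1 + x := by linarith
  have hq : (1-s)*x^2 + (1-a)*x - a = 0 := by
    rw [hxval]; field_simp
    linear_combination (-a) * hrsq
  rw [Af, hxa]
  rw [show (1-s)*x + s * (x/(1+x)) = ((1-s)*x*(1+x) + s*x) / (1+x) by field_simp]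
  rw [div_eq_iff h1x.ne']
  nlinarith [hq]

lemma Af_Bf {s a : ℝ} (hs1 : s ≤ 1) (h : s < 1 ∨ |a| < 1) : Af s (Bf s a) = a := by
  rcases le_or_gt 0 a with ha | ha
  · exact Af_Bf_nonneg hs1 ha h
  · have := Af_Bf_nonneg hs1 (neg_nonneg.2 ha.le) (by rwa [abs_neg])
    rw [Bf_odd, Af_odd] at this
    linarith [this]

lemma Af_continuous : Continuous fun p : ℝ × ℝ => Af p.1 p.2 := by
  apply Continuous.add
  · exact (continuous_const.sub continuous_fst).mul continuous_snd
  · exact continuous_fst.mul (continuous_snd.div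
      (continuous_const.add continuous_snd.abs) (fun p => by positivity))

lemma Af_zero (x : ℝ) : Af 0 x = x := by simp [Af]

def Tset : Set (ℝ × ℝ) :=
  (⋃ n : ℤ, (Set.Iic (-1 : ℝ) ∪ Set.Ici (1 : ℝ)) ×ˢ ({(2 * (n : ℝ))} : Set ℝ))ᶜ

lemma mem_Tset {p : ℝ × ℝ} : p ∈ Tset ↔ ∀ n : ℤ, p.2 = 2*(n:ℝ) → |p.1| < 1 := by
  simp only [Tset, Set.mem_compl_iff, Set.mem_iUnion, Set.mem_prod, Set.mem_union,
    Set.mem_Iic, Set.mem_Ici, Set.mem_singleton_iff, not_exists, not_and]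
  constructor
  · intro h n hn
    have hne := h n
    rw [abs_lt]
    constructor
    · by_contra hle; push_neg at hle; exact hne (Or.inl (by linarith)) hn
    · by_contra hle; push_neg at hle; exact hne (Or.inr hle) hn
  · intro h n hor hn
    have := h n hn
    rw [abs_lt] at this
    rcases hor with h1 | h1 <;> linarith [this.1, this.2]

noncomputable def fwd (p : ℝ × ℝ) : ℝ × ℝ := (Af (tpar p.2) p.1, p.2)
noncomputable def bwd (p : ℝ × ℝ) : ℝ × ℝ := (Bf (tpar p.2) p.1, p.2)

lemma fwd_mem (p : ℝ × ℝ) : fwd p ∈ Tset := by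
  rw [mem_Tset]
  intro n hn
  simp only [fwd] at hn ⊢
  rw [hn, tpar_even n]
  exact Af_lt_one p.1

lemma bwd_continuousOn : ContinuousOn bwd Tset := by
  have hinner : Continuous (fun q : ℝ × ℝ =>
      Real.sqrt ((1 - |q.1|)^2 + 4*(1-(tpar q.2))*|q.1|) + 1 - |q.1|) := by
    refine Continuous.sub (Continuous.add (Real.continuous_sqrt.comp ?_) continuous_const)
      continuous_fst.abs
    exact (((continuous_const.sub continuous_fst.abs).pow 2)).add
      ((continuous_const.mul (continuous_const.sub (tpar_continuous.comp continuous_snd))).mul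
        continuous_fst.abs)
  intro p hp
  apply ContinuousAt.continuousWithinAt
  have hD : 0 < Real.sqrt ((1 - |p.1|)^2 + 4*(1-(tpar p.2))*|p.1|) + 1 - |p.1| := by
    apply D_pos (tpar_le_one _)
    rcases lt_or_eq_of_le (tpar_le_one p.2) with h | h
    · exact Or.inl h
    · rcases tpar_eq_one h with ⟨n, hn⟩
      exact Or.inr (mem_Tset.1 hp n hn)
  apply ContinuousAt.prodMk
  · exact ContinuousAt.div (continuous_const.mul continuous_fst).continuousAt
      hinner.continuousAt hD.ne'
  · exact continuous_snd.continuousAt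

noncomputable def homeoT : (ℝ × ℝ) ≃ₜ Tset where
  toFun p := ⟨fwd p, fwd_mem p⟩
  invFun q := bwd q.1
  left_inv p := by
    simp only [bwd, fwd]
    exact Prod.ext (Bf_Af (tpar_nonneg p.2) (tpar_le_one p.2)) rfl
  right_inv q := by
    apply Subtype.ext
    simp only [fwd, bwd]
    refine Prod.ext ?_ rfl
    apply Af_Bf (tpar_le_one _)
    rcases lt_or_eq_of_le (tpar_le_one q.1.2) with h | h
    · exact Or.inl h
    · rcases tpar_eq_one h with ⟨n, hn⟩
      exact Or.inr (mem_Tset.1 q.2 n hn)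
  continuous_toFun := by
    apply Continuous.subtype_mk
    exact (Af_continuous.comp ((tpar_continuous.comp continuous_snd).prodMk
      continuous_fst)).prodMk continuous_snd
  continuous_invFun := bwd_continuousOn.restrict


/-- Let `T` be the plane with the horizontal rays `{(x, 2n) : x ≤ -1}` and
`{(x, 2n) : x ≥ 1}` removed for every integer `n`. Then there is a homeomorphism `h : ℝ² → T`
preserving horizontal lines, i.e. `h (x, y) = (α (x, y), y)` with `α` continuous, which is the
identity outside `ℝ × ⋃_{n ∈ ℤ} (2n - 1/2, 2n + 1/2)`. -/
theorem stmt_3 :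
    let T : Set (ℝ × ℝ) :=
      (⋃ n : ℤ, (Set.Iic (-1 : ℝ) ∪ Set.Ici (1 : ℝ)) ×ˢ ({(2 * (n : ℝ))} : Set ℝ))ᶜ
    ∃ h : (ℝ × ℝ) ≃ₜ T,
      (∃ α : ℝ × ℝ → ℝ, Continuous α ∧ ∀ p : ℝ × ℝ, ((h p : ℝ × ℝ)) = (α p, p.2)) ∧
      (∀ p : ℝ × ℝ,
        (∀ n : ℤ, p.2 ∉ Set.Ioo (2 * (n : ℝ) - 1/2) (2 * (n : ℝ) + 1/2)) →
        ((h p : ℝ × ℝ)) = p) := by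
  intro T
  refine ⟨homeoT, ⟨fun p => Af (tpar p.2) p.1, ?_, fun p => rfl⟩, ?_⟩
  · exact Af_continuous.comp ((tpar_continuous.comp continuous_snd).prodMk continuous_fst)
  · intro p hp
    show fwd p = p
    simp only [fwd]
    rw [tpar_eq_zero hp, Af_zero]
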